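/- Let c > 0, and set x* = max{c, √c} and y* = min{1, √c}. Then the pair (x*, y*) is feasible, i.e. x* > 0, 0 < y* ≤ 1, and x*·y* ≥ c; and it minimizes the squared distance to the origin over the feasible set: for every pair of real numbers (x, y) with x > 0, 0 < y ≤ 1 and x·y ≥ c, one has x² + y² ≥ x*² + y*². -/
import Mathlib


/-- **MinNI on the difference scale, continuous outcome.**  For `c > 0`, the pair
`(x*, y*) = (max{c, √c}, min{1, √c})` is feasible — `x* > 0`, `0 < y* ≤ 1`,
`x*·y* ≥ c` — and minimizes the squared distance to the origin over the feasible set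
`{(x, y) : x > 0, 0 < y ≤ 1, x·y ≥ c}`. -/
theorem minNI_difference_scale_continuous (c : ℝ) (hc : 0 < c)
    (xstar ystar : ℝ)
    (hx : xstar = max c (Real.sqrt c)) (hy : ystar = min 1 (Real.sqrt c)) :
    (0 < xstar ∧ 0 < ystar ∧ ystar ≤ 1 ∧ c ≤ xstar * ystar) ∧
    ∀ x y : ℝ, 0 < x → 0 < y → y ≤ 1 → c ≤ x * y →
      xstar ^ 2 + ystar ^ 2 ≤ x ^ 2 + y ^ 2 := by
  have hs : 0 < Real.sqrt c := Real.sqrt_pos.mpr hc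
  have hsq : Real.sqrt c * Real.sqrt c = c := Real.mul_self_sqrt hc.le
  rcases le_or_gt c 1 with h1 | h1
  · -- c ≤ 1 : sqrt c ≤ 1 and c ≤ sqrt c
    have hs1 : Real.sqrt c ≤ 1 := by
      nlinarith [Real.sq_sqrt hc.le, Real.sqrt_nonneg c]
    have hcs : c ≤ Real.sqrt c := by nlinarith
    have hxe : xstar = Real.sqrt c := by rw [hx, max_eq_right hcs]
    have hye : ystar = Real.sqrt c := by rw [hy, min_eq_right hs1]
    subst hxe hye
    refine ⟨⟨hs, hs, hs1, by nlinarith⟩, ?_⟩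
    intro x y hxp hyp hy1 hxy
    nlinarith [sq_nonneg (x - y), sq_nonneg (x + y)]
  · -- 1 < c : sqrt c ≥ 1 and c ≥ sqrt c
    have hs1 : 1 ≤ Real.sqrt c := by
      nlinarith [Real.sq_sqrt hc.le, Real.sqrt_nonneg c]
    have hcs : Real.sqrt c ≤ c := by nlinarith
    have hxe : xstar = c := by rw [hx, max_eq_left hcs]
    have hye : ystar = 1 := by rw [hy, min_eq_left hs1]
    rw [hxe, hye]
    refine ⟨⟨hc, one_pos, le_refl 1, by nlinarith⟩, ?_⟩
    intro x y hxp hyp hy1 hxy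
    have hxc : c / y ≤ x := (div_le_iff₀ hyp).mpr hxy
    have h2 : c ^ 2 / y ^ 2 ≤ x ^ 2 := by
      have := mul_le_mul hxc hxc (by positivity) hxp.le
      calc c ^ 2 / y ^ 2 = (c / y) * (c / y) := by ring
        _ ≤ x * x := this
        _ = x ^ 2 := by ring
    have h3 : c ^ 2 + 1 ≤ c ^ 2 / y ^ 2 + y ^ 2 := by
      have key : (y ^ 2 - 1) * (y ^ 2 - c ^ 2) ≥ 0 := by
        have a1 : y ^ 2 - 1 ≤ 0 := by nlinarith
        have a2 : y ^ 2 - c ^ 2 ≤ 0 := by nlinarith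
        nlinarith
      have hy2 : 0 < y ^ 2 := by positivity
      rw [div_add' _ _ _ (ne_of_gt hy2), le_div_iff₀ hy2]
      nlinarith
    linarith
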